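/- Every functor F : C ⥤ D between categories factors, up to natural isomorphism, as a composite F ≅ F₁ ⋙ F₂ ⋙ F₃, where F₁ is full and essentially surjective (forgets at most stuff), F₂ is faithful and essentially surjective (forgets at most structure), and F₃ is full and faithful (forgets at most properties). -/

import Mathlib

open CategoryTheory

universe v₁ v₂ u₁ u₂

/-- Auxiliary: same objects as `C`, but morphisms are the images of `F` on hom-sets. -/
def HomImageCat {C : Type u₁} [Category.{v₁} C] {D : Type u₂} [Category.{v₂} D]
    (_F : C ⥤ D) : Type u₁ := C

/-- Morphisms of `HomImageCat F`: morphisms of `D` in the image of `F` on hom-sets. -/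
@[ext]
structure HomImageHom {C : Type u₁} [Category.{v₁} C] {D : Type u₂} [Category.{v₂} D]
    (F : C ⥤ D) (X Y : C) where
  val : F.obj X ⟶ F.obj Y
  prop : ∃ g : X ⟶ Y, F.map g = val

/-- Identity for `HomImageCat`. -/
def homImageId {C : Type u₁} [Category.{v₁} C] {D : Type u₂} [Category.{v₂} D]
    (F : C ⥤ D) (X : C) : HomImageHom F X X := ⟨𝟙 _, 𝟙 X, F.map_id X⟩

/-- Composition for `HomImageCat`. -/
def homImageComp {C : Type u₁} [Category.{v₁} C] {D : Type u₂} [Category.{v₂} D]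
    (F : C ⥤ D) {X Y Z : C} (f : HomImageHom F X Y) (g : HomImageHom F Y Z) :
    HomImageHom F X Z :=
  ⟨f.val ≫ g.val, by
    obtain ⟨a, ha⟩ := f.prop
    obtain ⟨b, hb⟩ := g.prop
    exact ⟨a ≫ b, by rw [F.map_comp, ha, hb]⟩⟩

instance homImageCategory {C : Type u₁} [Category.{v₁} C] {D : Type u₂} [Category.{v₂} D]
    (F : C ⥤ D) : Category.{v₂} (HomImageCat F) where
  Hom X Y := HomImageHom F X Y
  id X := homImageId F X
  comp f g := homImageComp F f g
  id_comp f := HomImageHom.ext (Category.id_comp f.val)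
  comp_id f := HomImageHom.ext (Category.comp_id f.val)
  assoc f g h := HomImageHom.ext (Category.assoc f.val g.val h.val)

/-- The first factor: identity on objects, full and essentially surjective. -/
def homImageF₁ {C : Type u₁} [Category.{v₁} C] {D : Type u₂} [Category.{v₂} D]
    (F : C ⥤ D) : C ⥤ HomImageCat F where
  obj X := X
  map g := ⟨F.map g, g, rfl⟩
  map_id X := HomImageHom.ext (F.map_id X)
  map_comp f g := HomImageHom.ext (F.map_comp f g)

instance homImageF₁_full {C : Type u₁} [Category.{v₁} C] {D : Type u₂} [Category.{v₂} D]
    (F : C ⥤ D) : (homImageF₁ F).Full where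
  map_surjective f := ⟨f.prop.choose, HomImageHom.ext f.prop.choose_spec⟩

instance homImageF₁_essSurj {C : Type u₁} [Category.{v₁} C] {D : Type u₂} [Category.{v₂} D]
    (F : C ⥤ D) : (homImageF₁ F).EssSurj where
  mem_essImage Y := ⟨Y, ⟨Iso.refl _⟩⟩

/-- The second factor: to the essential image, faithful and essentially surjective. -/
def homImageF₂ {C : Type u₁} [Category.{v₁} C] {D : Type u₂} [Category.{v₂} D]
    (F : C ⥤ D) : HomImageCat F ⥤ F.EssImageSubcategory where
  obj X := ⟨F.obj X, F.obj_mem_essImage X⟩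
  map f := ObjectProperty.homMk f.val
  map_id _ := rfl
  map_comp _ _ := rfl

instance homImageF₂_faithful {C : Type u₁} [Category.{v₁} C] {D : Type u₂} [Category.{v₂} D]
    (F : C ⥤ D) : (homImageF₂ F).Faithful where
  map_injective h := HomImageHom.ext (congrArg (fun f => f.hom) h)

instance homImageF₂_essSurj {C : Type u₁} [Category.{v₁} C] {D : Type u₂} [Category.{v₂} D]
    (F : C ⥤ D) : (homImageF₂ F).EssSurj where
  mem_essImage Y :=
    ⟨(Functor.essImage.witness Y.2 : C),
      ⟨F.essImage.ι.preimageIso (Functor.essImage.getIso Y.2)⟩⟩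

instance asSmallUp_isEquivalence {C : Type u₁} [Category.{v₁} C] :
    (AsSmall.up : C ⥤ AsSmall.{v₂} C).IsEquivalence :=
  AsSmall.equiv.isEquivalence_functor

instance asSmallDown_isEquivalence {C : Type u₁} [Category.{v₁} C] :
    (AsSmall.down : AsSmall.{v₂} C ⥤ C).IsEquivalence :=
  AsSmall.equiv.isEquivalence_inverse

/-- Every functor `F : C ⥤ D` factors, up to natural isomorphism, as
`F ≅ F₁ ⋙ F₂ ⋙ F₃`, where `F₁` is full and essentially surjective (forgets at most
stuff), `F₂` is faithful and essentially surjective (forgets at most structure), and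
`F₃` is full and faithful (forgets at most properties). -/
theorem functor_factorization_stuff_structure_properties
    {C : Type u₁} [Category.{v₁} C] {D : Type u₂} [Category.{v₂} D] (F : C ⥤ D) :
    ∃ (B₁ B₂ : Cat.{max u₁ u₂ v₁ v₂, max u₁ u₂ v₁ v₂})
      (F₁ : C ⥤ B₁) (F₂ : B₁ ⥤ B₂) (F₃ : B₂ ⥤ D),
      F₁.Full ∧ F₁.EssSurj ∧ F₂.Faithful ∧ F₂.EssSurj ∧ F₃.Full ∧ F₃.Faithful ∧
        Nonempty (F ≅ F₁ ⋙ F₂ ⋙ F₃) := by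
  let B₁ := AsSmall.{max u₁ u₂ v₁ v₂} (HomImageCat F)
  let B₂ := AsSmall.{max u₁ u₂ v₁ v₂} F.EssImageSubcategory
  let F₁ : C ⥤ B₁ := homImageF₁ F ⋙ AsSmall.up
  let F₂ : B₁ ⥤ B₂ := AsSmall.down ⋙ homImageF₂ F ⋙ AsSmall.up
  let F₃ : B₂ ⥤ D := AsSmall.down ⋙ F.essImage.ι
  have h1 : F₁.Full := inferInstance
  have h2 : F₁.EssSurj := inferInstance
  have h3 : F₂.Faithful := inferInstance
  have h4 : F₂.EssSurj := inferInstance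
  have h5 : F₃.Full := inferInstance
  have h6 : F₃.Faithful := inferInstance
  refine ⟨Cat.of B₁, Cat.of B₂, F₁, F₂, F₃, h1, h2, h3, h4, h5, h6,
    ⟨NatIso.ofComponents (fun X => Iso.refl _) (by
      intro X Y f
      simp [F₁, F₂, F₃, homImageF₁, homImageF₂]
      erw [Category.comp_id, Category.id_comp]
      rfl)⟩⟩
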